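/- Assume in addition λ + μ > 0. Then the Hermitian matrix W·p₁ is positive definite: for every nonzero u ∈ ℂ^{n+1} one has u*·(W·p₁)·u > 0, where W := blockdiag(G⁻¹, 1, 1) and p₁ := [[μs·I_{n−1} + (μ(λ+μ)/((λ+3μ)s))·ξ♯ξᵀ, −(2iμ²/(λ+3μ))·ξ♯, 0], [(2iμ²/(λ+3μ))·ξᵀ, (2μ(λ+2μ)/(λ+3μ))·s, 0], [0, 0, αs]]. -/

import Mathlib

noncomputable section

open Matrix

open scoped ComplexOrder

/-- Block matrix `[[T, col, 0], [row, d, 0], [0, 0, e]]` of size `(n+1) × (n+1)`,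
with blocks of sizes `n-1, 1, 1`. -/
def blk (n : ℕ) (T : Fin (n-1) → Fin (n-1) → ℂ) (colv rowv : Fin (n-1) → ℂ)
    (d e : ℂ) : Matrix (Fin (n+1)) (Fin (n+1)) ℂ :=
  Matrix.of fun i j =>
    if hi : (i : ℕ) < n - 1 then
      if hj : (j : ℕ) < n - 1 then T ⟨i, hi⟩ ⟨j, hj⟩
      else if (j : ℕ) = n - 1 then colv ⟨i, hi⟩ else 0
    else if (i : ℕ) = n - 1 then
      if hj : (j : ℕ) < n - 1 then rowv ⟨j, hj⟩
      else if (j : ℕ) = n - 1 then d else 0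
    else if (j : ℕ) = n then e else 0

/-- The matrix `F₁ = [[(1/s)ξ♯ξᵀ, i ξ♯, 0], [i ξᵀ, −s, 0], [0, 0, 0]]`. -/
def F1mat (n : ℕ) (ξ ξs : Fin (n-1) → ℝ) (s : ℝ) :
    Matrix (Fin (n+1)) (Fin (n+1)) ℂ :=
  blk n (fun a b => ((1 / s * ξs a * ξ b : ℝ) : ℂ))
    (fun a => Complex.I * ((ξs a : ℝ) : ℂ))
    (fun b => Complex.I * ((ξ b : ℝ) : ℂ))
    ((-s : ℝ) : ℂ) 0

/-- The matrix `F₂ = [[(1/s)ξ♯ξᵀ, −i((λ+2μ)/μ) ξ♯, 0], [−i(μ/(λ+2μ)) ξᵀ, −s, 0], [0, 0, 0]]`. -/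
def F2mat (n : ℕ) (ξ ξs : Fin (n-1) → ℝ) (s lam mu : ℝ) :
    Matrix (Fin (n+1)) (Fin (n+1)) ℂ :=
  blk n (fun a b => ((1 / s * ξs a * ξ b : ℝ) : ℂ))
    (fun a => -(Complex.I * (((lam + 2*mu)/mu * ξs a : ℝ) : ℂ)))
    (fun b => -(Complex.I * ((mu/(lam + 2*mu) * ξ b : ℝ) : ℂ)))
    ((-s : ℝ) : ℂ) 0

/-- `b₁ = i(λ+μ)·[[0, (1/μ) ξ♯, 0], [(1/(λ+2μ)) ξᵀ, 0, 0], [0, 0, 0]]`. -/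
def b1mat (n : ℕ) (ξ ξs : Fin (n-1) → ℝ) (lam mu : ℝ) :
    Matrix (Fin (n+1)) (Fin (n+1)) ℂ :=
  (Complex.I * ((lam + mu : ℝ) : ℂ)) •
    blk n (fun _ _ => 0)
      (fun a => ((1/mu * ξs a : ℝ) : ℂ))
      (fun b => ((1/(lam + 2*mu) * ξ b : ℝ) : ℂ)) 0 0

/-- `c₂ = −[[s²·I + ((λ+μ)/μ) ξ♯ξᵀ, 0, 0], [0, (μ/(λ+2μ)) s², 0], [0, 0, s²]]`. -/
def c2mat (n : ℕ) (ξ ξs : Fin (n-1) → ℝ) (s lam mu : ℝ) :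
    Matrix (Fin (n+1)) (Fin (n+1)) ℂ :=
  -(blk n
      (fun a b => ((s^2 * (if a = b then 1 else 0) + (lam + mu)/mu * ξs a * ξ b : ℝ) : ℂ))
      (fun _ => 0) (fun _ => 0)
      ((mu/(lam + 2*mu) * s^2 : ℝ) : ℂ) ((s^2 : ℝ) : ℂ))

/-- The principal symbol `p₁` of the thermoelastic Dirichlet-to-Neumann map. -/
def p1mat (n : ℕ) (ξ ξs : Fin (n-1) → ℝ) (s lam mu al : ℝ) :
    Matrix (Fin (n+1)) (Fin (n+1)) ℂ :=
  blk n
    (fun a b => ((mu * s * (if a = b then 1 else 0)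
        + mu * (lam + mu)/((lam + 3*mu) * s) * ξs a * ξ b : ℝ) : ℂ))
    (fun a => -(Complex.I * ((2 * mu^2/(lam + 3*mu) * ξs a : ℝ) : ℂ)))
    (fun b => Complex.I * ((2 * mu^2/(lam + 3*mu) * ξ b : ℝ) : ℂ))
    ((2 * mu * (lam + 2*mu)/(lam + 3*mu) * s : ℝ) : ℂ)
    ((al * s : ℝ) : ℂ)

/-- `A = blockdiag(μ·I, λ+2μ, α)`. -/
def Amat (n : ℕ) (lam mu al : ℝ) : Matrix (Fin (n+1)) (Fin (n+1)) ℂ :=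
  blk n (fun a b => if a = b then ((mu : ℝ) : ℂ) else 0)
    (fun _ => 0) (fun _ => 0) ((lam + 2*mu : ℝ) : ℂ) ((al : ℝ) : ℂ)

/-- `d₁ = [[0, iμ ξ♯, 0], [iλ ξᵀ, 0, 0], [0, 0, 0]]`. -/
def d1mat (n : ℕ) (ξ ξs : Fin (n-1) → ℝ) (lam mu : ℝ) :
    Matrix (Fin (n+1)) (Fin (n+1)) ℂ :=
  blk n (fun _ _ => 0)
    (fun a => Complex.I * ((mu * ξs a : ℝ) : ℂ))
    (fun b => Complex.I * ((lam * ξ b : ℝ) : ℂ)) 0 0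

/-- `W = blockdiag(G⁻¹, 1, 1)`. -/
def Wmat (n : ℕ) (G : Matrix (Fin (n-1)) (Fin (n-1)) ℝ) :
    Matrix (Fin (n+1)) (Fin (n+1)) ℂ :=
  blk n (fun a b => ((G⁻¹ a b : ℝ) : ℂ)) (fun _ => 0) (fun _ => 0) 1 1

section AuxLemmas

lemma posDef_submatrix_equiv' {m n : Type*} [Fintype m] [Fintype n] [DecidableEq m] [DecidableEq n]
    {M : Matrix n n ℂ} (hM : M.PosDef) (e : m ≃ n) : (M.submatrix e e).PosDef := by
  refine Matrix.PosDef.of_dotProduct_mulVec_pos (hM.isHermitian.submatrix e) fun x hx => ?_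
  have h1 : (M.submatrix e e) *ᵥ x = (M *ᵥ (x ∘ e.symm)) ∘ e :=
    Matrix.submatrix_mulVec_equiv M x e e
  rw [h1]
  have h2 : star x ⬝ᵥ (M *ᵥ (x ∘ ⇑e.symm)) ∘ ⇑e = star (x ∘ e.symm) ⬝ᵥ (M *ᵥ (x ∘ e.symm)) := by
    simp only [dotProduct]
    rw [← Equiv.sum_comp e (fun i => star (x ∘ ⇑e.symm) i * (M *ᵥ (x ∘ ⇑e.symm)) i)]
    simp
  rw [h2]
  exact hM.dotProduct_mulVec_pos (fun h0 => hx (by ext i; simpa using congrFun h0 (e i)))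

lemma ofReal_dot {ι : Type*} [Fintype ι] (u v : ι → ℝ) :
    (fun a => ((u a : ℝ) : ℂ)) ⬝ᵥ (fun a => ((v a : ℝ) : ℂ)) = ((u ⬝ᵥ v : ℝ) : ℂ) := by
  rw [show ((u ⬝ᵥ v : ℝ) : ℂ) = Complex.ofRealHom (u ⬝ᵥ v) from rfl,
    RingHom.map_dotProduct]
  rfl

lemma map_mulVec_ofReal {ι κ : Type*} [Fintype κ] (A : Matrix ι κ ℝ) (v : κ → ℝ) :
    (A.map Complex.ofReal) *ᵥ (fun a => ((v a : ℝ) : ℂ)) = fun i => (((A *ᵥ v) i : ℝ) : ℂ) := by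
  funext i
  rw [show ((((A *ᵥ v) i : ℝ)) : ℂ) = Complex.ofRealHom ((A *ᵥ v) i) from rfl,
    RingHom.map_mulVec]
  rfl

lemma posDef_map_ofReal {ι : Type*} [Fintype ι] [DecidableEq ι]
    {A : Matrix ι ι ℝ} (hA : A.PosDef) : (A.map Complex.ofReal).PosDef := by
  have hsymm : ∀ i j, A j i = A i j := fun i j => by
    have := congrFun (congrFun hA.isHermitian i) j
    simpa [Matrix.conjTranspose_apply] using this
  refine Matrix.PosDef.of_dotProduct_mulVec_pos ?_ ?_
  · ext i j
    simp [Matrix.conjTranspose_apply, Matrix.map_apply, Complex.conj_ofReal, hsymm i j]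
  · intro x hx
    set u : ι → ℝ := fun a => (x a).re with hu
    set w : ι → ℝ := fun a => (x a).im with hw
    set uc : ι → ℂ := fun a => ((u a : ℝ) : ℂ)
    set wc : ι → ℂ := fun a => ((w a : ℝ) : ℂ)
    have hxdec : x = uc + Complex.I • wc := by
      funext a
      simp [uc, wc, u, w, Complex.ext_iff]
    have hstar : star x = uc + (-Complex.I) • wc := by
      rw [hxdec]; funext a
      simp [uc, wc, Complex.ext_iff]
    have hMu : (A.map Complex.ofReal) *ᵥ uc = fun i => (((A *ᵥ u) i : ℝ) : ℂ) :=
      map_mulVec_ofReal A u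
    have hMw : (A.map Complex.ofReal) *ᵥ wc = fun i => (((A *ᵥ w) i : ℝ) : ℂ) :=
      map_mulVec_ofReal A w
    have hMx : (A.map Complex.ofReal) *ᵥ x
        = (fun i => (((A *ᵥ u) i : ℝ) : ℂ)) + Complex.I • (fun i => (((A *ᵥ w) i : ℝ) : ℂ)) := by
      rw [hxdec, Matrix.mulVec_add, Matrix.mulVec_smul, hMu, hMw]
    rw [hstar, hMx]
    rw [add_dotProduct, smul_dotProduct, dotProduct_add,
      dotProduct_add]
    have e1 : uc ⬝ᵥ (fun i => (((A *ᵥ u) i : ℝ) : ℂ)) = ((u ⬝ᵥ A *ᵥ u : ℝ) : ℂ) := ofReal_dot u _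
    have e2 : uc ⬝ᵥ (fun i => (((A *ᵥ w) i : ℝ) : ℂ)) = ((u ⬝ᵥ A *ᵥ w : ℝ) : ℂ) := ofReal_dot u _
    have e3 : wc ⬝ᵥ (fun i => (((A *ᵥ u) i : ℝ) : ℂ)) = ((w ⬝ᵥ A *ᵥ u : ℝ) : ℂ) := ofReal_dot w _
    have e4 : wc ⬝ᵥ (fun i => (((A *ᵥ w) i : ℝ) : ℂ)) = ((w ⬝ᵥ A *ᵥ w : ℝ) : ℂ) := ofReal_dot w _
    rw [dotProduct_smul, dotProduct_smul, e1, e2, e3, e4]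
    have hcomm : u ⬝ᵥ A *ᵥ w = w ⬝ᵥ A *ᵥ u := by
      simp only [dotProduct, Matrix.mulVec, Finset.mul_sum]
      rw [Finset.sum_comm]
      exact Finset.sum_congr rfl fun i _ => Finset.sum_congr rfl fun j _ => by
        rw [hsymm j i]; ring
    have hval : ((u ⬝ᵥ A *ᵥ u : ℝ) : ℂ) + Complex.I • ((u ⬝ᵥ A *ᵥ w : ℝ) : ℂ) +
        (-Complex.I) • (((w ⬝ᵥ A *ᵥ u : ℝ) : ℂ) + Complex.I • ((w ⬝ᵥ A *ᵥ w : ℝ) : ℂ))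
        = (((u ⬝ᵥ A *ᵥ u) + (w ⬝ᵥ A *ᵥ w) : ℝ) : ℂ) := by
      rw [hcomm]
      simp only [smul_eq_mul]
      push_cast
      linear_combination (-((w ⬝ᵥ A *ᵥ w : ℝ) : ℂ)) * Complex.I_sq
    rw [hval]
    have huw : u ≠ 0 ∨ w ≠ 0 := by
      by_contra h
      push_neg at h
      apply hx
      funext a
      have h1 := congrFun h.1 a
      have h2 := congrFun h.2 a
      simp only [u, w, Pi.zero_apply] at h1 h2
      exact Complex.ext h1 h2
    have key : 0 < (u ⬝ᵥ A *ᵥ u) + (w ⬝ᵥ A *ᵥ w) := by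
      have pu : 0 ≤ u ⬝ᵥ A *ᵥ u := by
        have := hA.posSemidef.dotProduct_mulVec_nonneg u; simpa using this
      have pw : 0 ≤ w ⬝ᵥ A *ᵥ w := by
        have := hA.posSemidef.dotProduct_mulVec_nonneg w; simpa using this
      rcases huw with h | h
      · have := hA.dotProduct_mulVec_pos h; simp only [star_trivial] at this; linarith
      · have := hA.dotProduct_mulVec_pos h; simp only [star_trivial] at this; linarith
    exact_mod_cast key

def ee (n : ℕ) (hn : 1 ≤ n) : (Fin (n-1) ⊕ Fin 2) ≃ Fin (n+1) :=
  finSumFinEquiv.trans (finCongr (by omega))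

lemma ee_inl (n : ℕ) (hn : 1 ≤ n) (a : Fin (n-1)) :
    ((ee n hn (Sum.inl a) : Fin (n+1)) : ℕ) = (a : ℕ) := rfl

lemma ee_inr (n : ℕ) (hn : 1 ≤ n) (j : Fin 2) :
    ((ee n hn (Sum.inr j) : Fin (n+1)) : ℕ) = n - 1 + (j : ℕ) := rfl

set_option linter.unreachableTactic false in
set_option linter.unusedTactic false in
lemma blk_eq_submatrix (n : ℕ) (hn : 1 ≤ n) (T : Fin (n-1) → Fin (n-1) → ℂ)
    (colv rowv : Fin (n-1) → ℂ) (d e' : ℂ) :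
    blk n T colv rowv d e' =
      (fromBlocks (Matrix.of T)
        (Matrix.of fun a (j : Fin 2) => if j = 0 then colv a else 0)
        (Matrix.of fun (i : Fin 2) b => if i = 0 then rowv b else 0)
        !![d, 0; 0, e']).submatrix (ee n hn).symm (ee n hn).symm := by
  have key : ∀ p q : Fin (n-1) ⊕ Fin 2,
      blk n T colv rowv d e' (ee n hn p) (ee n hn q) =
      (fromBlocks (Matrix.of T)
        (Matrix.of fun a (j : Fin 2) => if j = 0 then colv a else 0)
        (Matrix.of fun (i : Fin 2) b => if i = 0 then rowv b else 0)
        !![d, 0; 0, e']) p q := by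
    rintro (a | i) (b | j)
    · have ha : ((ee n hn (Sum.inl a) : Fin (n+1)) : ℕ) < n - 1 := a.2
      have hb : ((ee n hn (Sum.inl b) : Fin (n+1)) : ℕ) < n - 1 := b.2
      simp only [blk, of_apply, dif_pos ha, dif_pos hb, fromBlocks_apply₁₁]
      congr 1 <;> exact Fin.ext rfl
    · have ha : ((ee n hn (Sum.inl a) : Fin (n+1)) : ℕ) < n - 1 := a.2
      have hb1 : ¬ ((ee n hn (Sum.inr j) : Fin (n+1)) : ℕ) < n - 1 := by
        rw [ee_inr]; omega
      have hb2 : (((ee n hn (Sum.inr j) : Fin (n+1)) : ℕ) = n - 1) ↔ j = 0 := by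
        rw [ee_inr, Fin.ext_iff]
        omega
      simp only [blk, of_apply, dif_pos ha, dif_neg hb1, fromBlocks_apply₁₂, hb2]
      by_cases hj : j = 0
      · rw [if_pos hj, if_pos hj]
        congr 1
      · rw [if_neg hj, if_neg hj]
    · have ha1 : ¬ ((ee n hn (Sum.inr i) : Fin (n+1)) : ℕ) < n - 1 := by
        rw [ee_inr]; omega
      have hb : ((ee n hn (Sum.inl b) : Fin (n+1)) : ℕ) < n - 1 := b.2
      have ha2 : (((ee n hn (Sum.inr i) : Fin (n+1)) : ℕ) = n - 1) ↔ i = 0 := by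
        rw [ee_inr, Fin.ext_iff]
        omega
      simp only [blk, of_apply, dif_neg ha1, fromBlocks_apply₂₁, ha2]
      by_cases hi : i = 0
      · rw [if_pos hi, dif_pos hb, if_pos hi]
        congr 1
      · rw [if_neg hi, if_neg hi]
        have : ¬ ((ee n hn (Sum.inl b) : Fin (n+1)) : ℕ) = n := by
          have := b.2; rw [ee_inl]; omega
        rw [if_neg this]
    · have ha1 : ¬ ((ee n hn (Sum.inr i) : Fin (n+1)) : ℕ) < n - 1 := by
        rw [ee_inr]; omega
      have hb1 : ¬ ((ee n hn (Sum.inr j) : Fin (n+1)) : ℕ) < n - 1 := by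
        rw [ee_inr]; omega
      have ha2 : (((ee n hn (Sum.inr i) : Fin (n+1)) : ℕ) = n - 1) ↔ i = 0 := by
        rw [ee_inr, Fin.ext_iff]; omega
      have hb2 : (((ee n hn (Sum.inr j) : Fin (n+1)) : ℕ) = n - 1) ↔ j = 0 := by
        rw [ee_inr, Fin.ext_iff]; omega
      have hb3 : (((ee n hn (Sum.inr j) : Fin (n+1)) : ℕ) = n) ↔ j = 1 := by
        rw [ee_inr, Fin.ext_iff]; omega
      simp only [blk, of_apply, dif_neg ha1, dif_neg hb1, fromBlocks_apply₂₂, ha2, hb2, hb3]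
      fin_cases i <;> fin_cases j <;> simp
  ext i j
  have := key ((ee n hn).symm i) ((ee n hn).symm j)
  simpa using this

lemma mul_vecMulVec' {ι κ μ : Type*} [Fintype κ] (M : Matrix ι κ ℂ) (x : κ → ℂ) (y : μ → ℂ) :
    M * Matrix.vecMulVec x y = Matrix.vecMulVec (M *ᵥ x) y := by
  ext i j
  simp only [Matrix.mul_apply, Matrix.vecMulVec_apply, Matrix.mulVec, dotProduct,
    Finset.sum_mul]
  exact Finset.sum_congr rfl fun c _ => by ring

lemma vecMulVec_mulVec' {ι κ : Type*} [Fintype κ] (x : ι → ℂ) (y : κ → ℂ) (v : κ → ℂ) :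
    Matrix.vecMulVec x y *ᵥ v = (y ⬝ᵥ v) • x := by
  funext i
  simp only [Matrix.mulVec, Matrix.vecMulVec_apply, dotProduct, Pi.smul_apply,
    smul_eq_mul, Finset.mul_sum]
  rw [Finset.sum_mul]
  exact Finset.sum_congr rfl fun c _ => by ring

lemma endgame (mu s lam al Φr T2 W0 W1 imz : ℝ) (hmu : 0 < mu) (hs : 0<s)
    (hlm : 0<lam+mu) (hal : 0<al) (hΦ : 0<Φr) (hT2 : 0 ≤ T2) (hW0 : 0 ≤ W0) (hW1 : 0 ≤ W1)
    (hCS : T2 ≤ s^2*Φr) (himz : imz^2 ≤ W0*T2) :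
    0 < mu*s^2*(lam+3*mu)*Φr + mu*(lam+mu)*T2 + 2*mu*(lam+2*mu)*s^2*W0
      + al*(lam+3*mu)*s^2*W1 - 4*mu^2*s*imz := by
  have hb : 0 ≤ T2 + s^2*W0 := by positivity
  have hsq : (2*s*imz)^2 ≤ (T2 + s^2*W0)^2 := by
    nlinarith [himz, sq_nonneg (T2 - s^2*W0), mul_pos hs hs]
  have hlin : 2*s*imz ≤ T2 + s^2*W0 := by nlinarith [hsq, hb]
  have h1 : 4*mu^2*s*imz ≤ 2*mu^2*(T2 + s^2*W0) := by nlinarith [hlin, sq_nonneg mu, hmu]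
  have p1 : 0 ≤ 2*mu^2*(s^2*Φr - T2) := by nlinarith [hCS, sq_nonneg mu]
  have p2 : 0 < mu*(lam+mu)*(s^2*Φr) := by positivity
  have p3 : 0 ≤ 2*mu*(lam+mu)*(s^2*W0) := by positivity
  have hl3 : 0 < lam + 3*mu := by linarith
  have p4 : 0 ≤ al*(lam+3*mu)*(s^2*W1) :=
    mul_nonneg (mul_nonneg hal.le hl3.le) (by positivity)
  have p5 : 0 ≤ mu*(lam+mu)*T2 := mul_nonneg (mul_nonneg hmu.le hlm.le) hT2
  linarith [h1, p1, p2, p3, p4, p5]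

end AuxLemmas


set_option maxHeartbeats 1000000 in
/-- if moreover λ + μ > 0, the Hermitian matrix W·p₁ is positive definite. -/
theorem stmt11 (n : ℕ) (hn : 2 ≤ n)
    (G : Matrix (Fin (n-1)) (Fin (n-1)) ℝ) (hG : G.PosDef)
    (ξ : Fin (n-1) → ℝ) (hξ : ξ ≠ 0)
    (ξs : Fin (n-1) → ℝ) (hξs : ξs = G.mulVec ξ)
    (s : ℝ) (hs : s = Real.sqrt (ξ ⬝ᵥ G.mulVec ξ))
    (lam mu : ℝ) (hmu : 0 < mu) (hlm : 0 ≤ lam + mu)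
    (c : ℝ) (hc : c = (lam + mu)/(lam + 3*mu)) (al : ℝ) (hal : 0 < al) (hlm' : 0 < lam + mu) :
    (Wmat n G * p1mat n ξ ξs s lam mu al).PosDef := by
  have hn1 : 1 ≤ n := by omega
  have hl3 : 0 < lam + 3*mu := by linarith
  have hl2 : 0 < lam + 2*mu := by linarith
  have hξGξ : 0 < ξ ⬝ᵥ G.mulVec ξ := by
    have := hG.dotProduct_mulVec_pos hξ
    simpa using this
  have hspos : 0 < s := by rw [hs]; exact Real.sqrt_pos.mpr hξGξ
  have hs2 : s^2 = ξ ⬝ᵥ G.mulVec ξ := by rw [hs]; exact Real.sq_sqrt hξGξ.le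
  set Gi : Matrix (Fin (n-1)) (Fin (n-1)) ℂ := (G⁻¹).map Complex.ofReal with hGidef
  have hGi : Gi.PosDef := posDef_map_ofReal hG.inv
  set ξc : Fin (n-1) → ℂ := fun a => ((ξ a : ℝ) : ℂ) with hξcdef
  set ξsc : Fin (n-1) → ℂ := fun a => ((ξs a : ℝ) : ℂ) with hξscdef
  have hGinvG : G⁻¹ *ᵥ ξs = ξ := by
    rw [hξs, Matrix.mulVec_mulVec,
      Matrix.nonsing_inv_mul G (isUnit_iff_ne_zero.mpr hG.det_pos.ne'), Matrix.one_mulVec]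
  have hGiξs : Gi *ᵥ ξsc = ξc := by
    rw [hGidef, hξscdef, map_mulVec_ofReal (G⁻¹) ξs, hξcdef]
    funext i
    rw [hGinvG]
  have hGisymm : Giᵀ = Gi := by
    ext i j
    have h := congrFun (congrFun hG.inv.isHermitian i) j
    simp only [Matrix.conjTranspose_apply, star_trivial] at h
    simp only [Matrix.transpose_apply, hGidef, Matrix.map_apply]
    rw [h]
  set P11 : Matrix (Fin (n-1)) (Fin (n-1)) ℂ :=
    Matrix.of (fun a b => ((mu * s * (if a = b then 1 else 0)
        + mu * (lam + mu)/((lam + 3*mu) * s) * ξs a * ξ b : ℝ) : ℂ)) with hP11def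
  set P12 : Matrix (Fin (n-1)) (Fin 2) ℂ :=
    Matrix.of (fun a (j : Fin 2) =>
      if j = 0 then -(Complex.I * ((2 * mu^2/(lam + 3*mu) * ξs a : ℝ) : ℂ)) else 0) with hP12def
  set P21 : Matrix (Fin 2) (Fin (n-1)) ℂ :=
    Matrix.of (fun (i : Fin 2) b =>
      if i = 0 then Complex.I * ((2 * mu^2/(lam + 3*mu) * ξ b : ℝ) : ℂ) else 0) with hP21def
  set P22 : Matrix (Fin 2) (Fin 2) ℂ :=
    !![((2 * mu * (lam + 2*mu)/(lam + 3*mu) * s : ℝ) : ℂ), 0; 0, ((al * s : ℝ) : ℂ)] with hP22def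
  have hP : p1mat n ξ ξs s lam mu al
      = (fromBlocks P11 P12 P21 P22).submatrix (ee n hn1).symm (ee n hn1).symm :=
    blk_eq_submatrix n hn1 _ _ _ _ _
  have hW : Wmat n G = (fromBlocks Gi (0 : Matrix (Fin (n-1)) (Fin 2) ℂ)
      (0 : Matrix (Fin 2) (Fin (n-1)) ℂ) (1 : Matrix (Fin 2) (Fin 2) ℂ)).submatrix
        (ee n hn1).symm (ee n hn1).symm := by
    rw [Wmat, blk_eq_submatrix n hn1]
    have hg : Matrix.of (fun a b => ((G⁻¹ a b : ℝ) : ℂ)) = Gi := rfl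
    have hz1 : (Matrix.of fun (_ : Fin (n-1)) (j : Fin 2) => if j = 0 then (0:ℂ) else 0)
        = (0 : Matrix (Fin (n-1)) (Fin 2) ℂ) := by ext a j; simp
    have hz2 : (Matrix.of fun (i : Fin 2) (_ : Fin (n-1)) => if i = 0 then (0:ℂ) else 0)
        = (0 : Matrix (Fin 2) (Fin (n-1)) ℂ) := by ext i b; simp
    rw [hg, hz1, hz2, ← Matrix.one_fin_two]
  have hM : Wmat n G * p1mat n ξ ξs s lam mu al
      = (fromBlocks (Gi * P11) (Gi * P12) P21 P22).submatrix (ee n hn1).symm (ee n hn1).symm := by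
    rw [hW, hP, Matrix.submatrix_mul_equiv, fromBlocks_multiply]
    simp
  rw [hM]
  -- closed forms for the two upper blocks
  have hP11c : Gi * P11 = ((mu*s : ℝ) : ℂ) • Gi
      + ((mu * (lam + mu)/((lam + 3*mu) * s) : ℝ) : ℂ) • Matrix.vecMulVec ξc ξc := by
    have h0 : P11 = ((mu*s : ℝ) : ℂ) • (1 : Matrix (Fin (n-1)) (Fin (n-1)) ℂ)
        + ((mu * (lam + mu)/((lam + 3*mu) * s) : ℝ) : ℂ) • Matrix.vecMulVec ξsc ξc := by
      ext a b
      simp only [hP11def, Matrix.of_apply, Matrix.add_apply, Matrix.smul_apply,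
        Matrix.one_apply, Matrix.vecMulVec_apply, smul_eq_mul, hξcdef, hξscdef]
      by_cases hab : a = b
      · rw [if_pos hab, if_pos hab]
        push_cast
        ring
      · rw [if_neg hab, if_neg hab]
        push_cast
        ring
    rw [h0, Matrix.mul_add, Matrix.mul_smul, Matrix.mul_smul, Matrix.mul_one,
      mul_vecMulVec', hGiξs]
  have hP12c : Gi * P12 = Matrix.of (fun a (j : Fin 2) =>
      if j = 0 then -(Complex.I * ((2 * mu^2/(lam + 3*mu) : ℝ) : ℂ)) * ξc a else 0) := by
    ext a j
    rw [Matrix.mul_apply]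
    by_cases hj : j = 0
    · simp only [hP12def, Matrix.of_apply, if_pos hj]
      have hterm : ∀ cc, Gi a cc * -(Complex.I * ((2 * mu^2/(lam + 3*mu) * ξs cc : ℝ) : ℂ))
          = -(Complex.I * ((2 * mu^2/(lam + 3*mu) : ℝ) : ℂ)) * (Gi a cc * ξsc cc) := by
        intro cc
        simp only [hξscdef]
        push_cast
        ring
      rw [Finset.sum_congr rfl (fun cc _ => hterm cc), ← Finset.mul_sum]
      congr 1
      exact congrFun hGiξs a
    · simp only [hP12def, Matrix.of_apply, if_neg hj, mul_zero, Finset.sum_const_zero]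
  -- Hermitian
  have hP22herm : P22.IsHermitian := by
    ext i j
    fin_cases i <;> fin_cases j <;>
      simp [hP22def, Matrix.conjTranspose_apply, Complex.conj_ofReal]
  have hB : (Gi * P12)ᴴ = P21 := by
    rw [hP12c]
    ext j a
    simp only [Matrix.conjTranspose_apply, Matrix.of_apply, hP21def]
    by_cases hj : j = 0
    · rw [if_pos hj, if_pos hj]
      simp only [hξcdef, star_mul', star_neg, Complex.star_def, _root_.map_mul, Complex.conj_I,
        Complex.conj_ofReal]
      push_cast
      ring
    · rw [if_neg hj, if_neg hj, star_zero]
  have hA : (Gi * P11).IsHermitian := by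
    rw [hP11c]
    have hv : (Matrix.vecMulVec ξc ξc)ᴴ = Matrix.vecMulVec ξc ξc := by
      ext i j
      simp only [Matrix.conjTranspose_apply, Matrix.vecMulVec_apply, star_mul', hξcdef,
        Complex.star_def, Complex.conj_ofReal]
      ring
    show _ᴴ = _
    rw [Matrix.conjTranspose_add, Matrix.conjTranspose_smul, Matrix.conjTranspose_smul,
      hGi.1, hv, Complex.star_def, Complex.conj_ofReal, Complex.conj_ofReal]
  have hHerm : (fromBlocks (Gi * P11) (Gi * P12) P21 P22).IsHermitian :=
    Matrix.isHermitian_fromBlocks_iff.mpr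
      ⟨hA, hB, by rw [← hB, Matrix.conjTranspose_conjTranspose], hP22herm⟩
  refine posDef_submatrix_equiv' (Matrix.PosDef.of_dotProduct_mulVec_pos hHerm ?_) _
  intro x hx
  set v : Fin (n-1) → ℂ := x ∘ Sum.inl with hvdef
  set wv : Fin 2 → ℂ := x ∘ Sum.inr with hwdef
  set t : ℂ := ξc ⬝ᵥ v with htdef
  set Φ : ℂ := star v ⬝ᵥ (Gi *ᵥ v) with hΦdef
  have hxeq : x = Sum.elim v wv := by funext p; cases p <;> rfl
  have hstarx : star x = Sum.elim (star v) (star wv) := by funext p; cases p <;> rfl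
  have hconj : star v ⬝ᵥ ξc = (starRingEnd ℂ) t := by
    rw [htdef]
    simp only [dotProduct, map_sum, Pi.star_apply, Complex.star_def]
    exact Finset.sum_congr rfl fun a _ => by
      rw [_root_.map_mul, hξcdef, Complex.conj_ofReal]
      ring
  have hA1 : (Gi * P11) *ᵥ v = ((mu*s : ℝ) : ℂ) • (Gi *ᵥ v)
      + ((mu * (lam + mu)/((lam + 3*mu) * s) : ℝ) : ℂ) • (t • ξc) := by
    rw [hP11c, Matrix.add_mulVec, Matrix.smul_mulVec, Matrix.smul_mulVec,
      vecMulVec_mulVec', htdef]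
  have hA2 : (Gi * P12) *ᵥ wv
      = (-(Complex.I * ((2 * mu^2/(lam + 3*mu) : ℝ) : ℂ)) * wv 0) • ξc := by
    rw [hP12c]
    funext a
    simp [Matrix.mulVec, dotProduct, Fin.sum_univ_two]
    ring
  have hA3 : P21 *ᵥ v = fun i : Fin 2 =>
      if i = 0 then Complex.I * ((2 * mu^2/(lam + 3*mu) : ℝ) : ℂ) * t else 0 := by
    funext i
    by_cases hi : i = 0
    · simp only [Matrix.mulVec, dotProduct, hP21def, Matrix.of_apply, if_pos hi,
        htdef, Finset.mul_sum]
      exact Finset.sum_congr rfl fun b _ => by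
        simp only [hξcdef]
        push_cast
        ring
    · simp [Matrix.mulVec, dotProduct, hP21def, hi]
  have hA4 : P22 *ᵥ wv = ![((2 * mu * (lam + 2*mu)/(lam + 3*mu) * s : ℝ) : ℂ) * wv 0,
      ((al * s : ℝ) : ℂ) * wv 1] := by
    funext i
    fin_cases i <;>
      simp [hP22def, Matrix.mulVec, dotProduct, Fin.sum_univ_two]
  have hd1 : star v ⬝ᵥ ((Gi * P11) *ᵥ v + (Gi * P12) *ᵥ wv)
      = ((mu*s : ℝ) : ℂ) * Φ
        + ((mu * (lam + mu)/((lam + 3*mu) * s) : ℝ) : ℂ) * (t * (starRingEnd ℂ) t)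
        + (-(Complex.I * ((2 * mu^2/(lam + 3*mu) : ℝ) : ℂ)) * wv 0) * (starRingEnd ℂ) t := by
    rw [hA1, hA2]
    simp only [dotProduct_add, dotProduct_smul, smul_eq_mul]
    rw [hconj, ← hΦdef]
    try ring
  have hd2 : star wv ⬝ᵥ (P21 *ᵥ v + P22 *ᵥ wv)
      = (starRingEnd ℂ) (wv 0) * (Complex.I * ((2 * mu^2/(lam + 3*mu) : ℝ) : ℂ) * t)
        + (starRingEnd ℂ) (wv 0) * (((2 * mu * (lam + 2*mu)/(lam + 3*mu) * s : ℝ) : ℂ) * wv 0)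
        + (starRingEnd ℂ) (wv 1) * (((al * s : ℝ) : ℂ) * wv 1) := by
    rw [hA3, hA4, dotProduct_add]
    simp [dotProduct, Fin.sum_univ_two]
    ring
  have hQ : star x ⬝ᵥ ((fromBlocks (Gi * P11) (Gi * P12) P21 P22) *ᵥ x)
      = ((mu*s : ℝ) : ℂ) * Φ
        + ((mu * (lam + mu)/((lam + 3*mu) * s) : ℝ) : ℂ) * (t * (starRingEnd ℂ) t)
        + (((2 * mu * (lam + 2*mu)/(lam + 3*mu) * s : ℝ) : ℂ)) * ((starRingEnd ℂ) (wv 0) * wv 0)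
        + ((al * s : ℝ) : ℂ) * ((starRingEnd ℂ) (wv 1) * wv 1)
        + Complex.I * ((2 * mu^2/(lam + 3*mu) : ℝ) : ℂ)
            * ((starRingEnd ℂ) (wv 0) * t - wv 0 * (starRingEnd ℂ) t) := by
    conv_lhs => rw [hstarx, hxeq]
    rw [fromBlocks_mulVec, Sum.elim_comp_inl, Sum.elim_comp_inr,
      sumElim_dotProduct_sumElim, hd1, hd2]
    ring
  -- real quantities
  have hΦ0 : (0:ℂ) ≤ Φ := hGi.posSemidef.dotProduct_mulVec_nonneg v
  have hΦim : Φ.im = 0 := by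
    have := (Complex.le_def.mp hΦ0).2
    simpa using this.symm
  have hΦc : Φ = ((Φ.re : ℝ) : ℂ) := Complex.ext (by simp) (by simp [hΦim])
  have hsub : (starRingEnd ℂ) (wv 0) * t - wv 0 * (starRingEnd ℂ) t
      = ((2 * ((starRingEnd ℂ) (wv 0) * t).im : ℝ) : ℂ) * Complex.I := by
    have h1 := Complex.sub_conj ((starRingEnd ℂ) (wv 0) * t)
    have h2 : (starRingEnd ℂ) ((starRingEnd ℂ) (wv 0) * t) = wv 0 * (starRingEnd ℂ) t := by
      rw [_root_.map_mul, Complex.conj_conj]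
    rw [h2] at h1
    exact h1
  have hQr : star x ⬝ᵥ ((fromBlocks (Gi * P11) (Gi * P12) P21 P22) *ᵥ x)
      = ((mu*s*Φ.re + mu * (lam + mu)/((lam + 3*mu) * s) * Complex.normSq t
          + 2 * mu * (lam + 2*mu)/(lam + 3*mu) * s * Complex.normSq (wv 0)
          + al * s * Complex.normSq (wv 1)
          - 2 * (2 * mu^2/(lam + 3*mu)) * ((starRingEnd ℂ) (wv 0) * t).im : ℝ) : ℂ) := by
    rw [hQ, hsub, Complex.mul_conj t]
    rw [show (starRingEnd ℂ) (wv 0) * wv 0 = ((Complex.normSq (wv 0) : ℝ) : ℂ) by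
      rw [mul_comm]; exact Complex.mul_conj _]
    rw [show (starRingEnd ℂ) (wv 1) * wv 1 = ((Complex.normSq (wv 1) : ℝ) : ℂ) by
      rw [mul_comm]; exact Complex.mul_conj _]
    push_cast
    linear_combination ((mu:ℂ) * (s:ℂ)) * hΦc
      + (2 * (2 * (mu:ℂ)^2/((lam:ℂ) + 3*(mu:ℂ))) * (((starRingEnd ℂ) (wv 0) * t).im : ℂ))
      * Complex.I_sq
  rw [hQr]
  -- Cauchy–Schwarz
  have hCS : Complex.normSq t ≤ s^2 * Φ.re := by
    set r : ℂ := t / ((s^2 : ℝ) : ℂ) with hrdef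
    set y : Fin (n-1) → ℂ := v - r • ξsc with hydef
    have hy0 : (0:ℂ) ≤ star y ⬝ᵥ (Gi *ᵥ y) := hGi.posSemidef.dotProduct_mulVec_nonneg y
    have hstar_ξsc : star ξsc = ξsc := funext fun a => by
      simp [hξscdef, Complex.conj_ofReal]
    have hξst : ξsc ⬝ᵥ (Gi *ᵥ v) = t := by
      rw [dotProduct_mulVec]
      have hvm : ξsc ᵥ* Gi = ξc := by
        rw [← hGisymm, Matrix.vecMul_transpose, hGiξs]
      rw [hvm]
    have hss : ξsc ⬝ᵥ ξc = ((s^2 : ℝ) : ℂ) := by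
      rw [hξscdef, hξcdef, ofReal_dot]
      congr 1
      rw [hξs, dotProduct_comm, ← hs2]
    have hs2ne : ((s^2:ℝ):ℂ) ≠ 0 := by
      exact_mod_cast (by positivity : (s:ℝ)^2 ≠ 0)
    have hexp : star y ⬝ᵥ (Gi *ᵥ y) = Φ - ((Complex.normSq t / s^2 : ℝ) : ℂ) := by
      rw [hydef, star_sub, star_smul, hstar_ξsc, Matrix.mulVec_sub, Matrix.mulVec_smul, hGiξs,
        sub_dotProduct, dotProduct_sub, dotProduct_sub,
        dotProduct_smul, smul_dotProduct, smul_dotProduct,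
        dotProduct_smul, hconj, hξst, hss, ← hΦdef]
      simp only [smul_eq_mul, hrdef, Complex.star_def, map_div₀, Complex.conj_ofReal]
      have hmc : t * (starRingEnd ℂ) t = ((Complex.normSq t : ℝ) : ℂ) := Complex.mul_conj t
      have hsne : ((s:ℂ))^2 ≠ 0 := by
        have : (s:ℂ) ≠ 0 := by exact_mod_cast hspos.ne'
        exact pow_ne_zero 2 this
      have hinv : ((s:ℂ))^2 * ((s:ℂ)⁻¹)^2 = 1 := by
        rw [← mul_pow, mul_inv_cancel₀ (by exact_mod_cast hspos.ne' : (s:ℂ) ≠ 0), one_pow]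
      push_cast
      linear_combination (-(1:ℂ)/((s:ℂ)^2)) * hmc
        + (t * (starRingEnd ℂ) t * ((s:ℂ)⁻¹)^2) * hinv
    rw [hexp] at hy0
    have hre := (Complex.le_def.mp hy0).1
    simp only [Complex.zero_re, Complex.sub_re, Complex.ofReal_re] at hre
    have h1 : Complex.normSq t / s^2 ≤ Φ.re := by linarith
    have h2 := (div_le_iff₀ (by positivity : (0:ℝ) < s^2)).mp h1
    linarith [h2]
  have himz : (((starRingEnd ℂ) (wv 0) * t).im)^2
      ≤ Complex.normSq (wv 0) * Complex.normSq t := by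
    have h1 : Complex.normSq ((starRingEnd ℂ) (wv 0) * t)
        = Complex.normSq (wv 0) * Complex.normSq t := by
      rw [Complex.normSq_mul, Complex.normSq_conj]
    rw [← h1, Complex.normSq_apply]
    nlinarith [sq_nonneg (((starRingEnd ℂ) (wv 0) * t).re)]
  have hΦr0 : 0 ≤ Φ.re := by
    have := (Complex.le_def.mp hΦ0).1
    simpa using this
  have hT2 : 0 ≤ Complex.normSq t := Complex.normSq_nonneg t
  have hW0 : 0 ≤ Complex.normSq (wv 0) := Complex.normSq_nonneg _
  have hW1 : 0 ≤ Complex.normSq (wv 1) := Complex.normSq_nonneg _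
  have goalr : 0 < mu*s*Φ.re + mu * (lam + mu)/((lam + 3*mu) * s) * Complex.normSq t
      + 2 * mu * (lam + 2*mu)/(lam + 3*mu) * s * Complex.normSq (wv 0)
      + al * s * Complex.normSq (wv 1)
      - 2 * (2 * mu^2/(lam + 3*mu)) * ((starRingEnd ℂ) (wv 0) * t).im := by
    by_cases hv0 : v = 0
    · have ht0 : t = 0 := by rw [htdef, hv0, dotProduct_zero]
      have hT20 : Complex.normSq t = 0 := by rw [ht0]; simp
      have himz0 : ((starRingEnd ℂ) (wv 0) * t).im = 0 := by rw [ht0]; simp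
      have hwne : wv 0 ≠ 0 ∨ wv 1 ≠ 0 := by
        by_contra h
        push_neg at h
        apply hx
        funext p
        cases p with
        | inl a => exact congrFun hv0 a
        | inr j =>
            fin_cases j
            · exact h.1
            · exact h.2
      have hdp : 0 < 2 * mu * (lam + 2*mu)/(lam + 3*mu) * s :=
        mul_pos (div_pos (mul_pos (mul_pos two_pos hmu) hl2) hl3) hspos
      have e1 : mu * (lam + mu)/((lam + 3*mu) * s) * Complex.normSq t = 0 := by
        rw [hT20, mul_zero]
      have e2 : 2 * (2 * mu^2/(lam + 3*mu)) * ((starRingEnd ℂ) (wv 0) * t).im = 0 := by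
        rw [himz0, mul_zero]
      have hms : 0 ≤ mu*s*Φ.re := mul_nonneg (mul_nonneg hmu.le hspos.le) hΦr0
      have hals : 0 ≤ al*s := mul_nonneg hal.le hspos.le
      rcases hwne with h | h
      · have hp := Complex.normSq_pos.mpr h
        nlinarith [mul_pos hdp hp, mul_nonneg hals hW1]
      · have hp := Complex.normSq_pos.mpr h
        nlinarith [mul_pos (mul_pos hal hspos) hp, mul_nonneg hdp.le hW0]
    · have hΦpos : 0 < Φ.re := by
        have h0 := hGi.dotProduct_mulVec_pos hv0
        have h := (Complex.lt_def.mp h0).1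
        simpa using h
      have hE := endgame mu s lam al Φ.re (Complex.normSq t) (Complex.normSq (wv 0))
        (Complex.normSq (wv 1)) (((starRingEnd ℂ) (wv 0) * t).im)
        hmu hspos hlm' hal hΦpos hT2 hW0 hW1 hCS himz
      have hiden : mu*s*Φ.re + mu * (lam + mu)/((lam + 3*mu) * s) * Complex.normSq t
          + 2 * mu * (lam + 2*mu)/(lam + 3*mu) * s * Complex.normSq (wv 0)
          + al * s * Complex.normSq (wv 1)
          - 2 * (2 * mu^2/(lam + 3*mu)) * ((starRingEnd ℂ) (wv 0) * t).im
          = (mu*s^2*(lam+3*mu)*Φ.re + mu*(lam+mu)*Complex.normSq t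
              + 2*mu*(lam+2*mu)*s^2*Complex.normSq (wv 0)
              + al*(lam+3*mu)*s^2*Complex.normSq (wv 1)
              - 4*mu^2*s*(((starRingEnd ℂ) (wv 0) * t).im)) / ((lam+3*mu)*s) := by
        have h3ne : lam + 3*mu ≠ 0 := hl3.ne'
        have hsne : s ≠ 0 := hspos.ne'
        rw [eq_div_iff (mul_ne_zero h3ne hsne)]
        have e : (lam + 3*mu) * (lam + 3*mu)⁻¹ = 1 := mul_inv_cancel₀ h3ne
        have e2 : s * s⁻¹ = 1 := mul_inv_cancel₀ hsne
        simp only [div_eq_mul_inv, mul_inv]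
        linear_combination (mu * (lam + mu) * Complex.normSq t * (lam + 3*mu)⁻¹ * (lam + 3*mu)) * e2
          + (mu * (lam + mu) * Complex.normSq t + 2 * mu * (lam + 2*mu) * s^2 * Complex.normSq (wv 0) - 4*mu^2*s*((starRingEnd ℂ) (wv 0) * t).im) * e
      rw [hiden]
      exact div_pos hE (mul_pos hl3 hspos)
  exact_mod_cast goalr
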